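/- arXiv:2102.12177 — 4 statements merged into one kernel-verified Lean document; each statement's English description precedes it below -/
import Mathlib

section
/- For integers s, t ≥ 1, m ≥ 1, and l ≥ 0, one has Σ_{m_1+m_2=m, m_1,m_2≥0} Σ_{|e|=m_2} ζ((s+m_1) ⊛ (((t+1) ⧢ ({2}^l)) ⊕ e)) − Σ_{m_1+m_2=m−1, m_1,m_2≥0} Σ_{|e|=m_2} ζ((s+m_1+1) ⊛ (((t+1) ⧢ ({2}^l)) ⊕ e)) = O_m((s) ⊛ ((t+1) ⧢ ({2}^l))), where e runs over sequences of nonnegative integers of depth l+1 with the indicated entry sum, and ⊕e is applied termwise. -/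
open scoped BigOperators

/-- The multiple zeta value of an index `k = (k₁, …, k_r)`:
`ζ(k₁,…,k_r) = Σ_{1 ≤ m₁ < ⋯ < m_r} 1/(m₁^{k₁} ⋯ m_r^{k_r})`,
written as a `tsum` over strictly increasing tuples of positive integers. -/
noncomputable def mzv (k : List ℕ) : ℝ :=
  ∑' f : {f : Fin k.length → ℕ+ // StrictMono f},
    ∏ i : Fin k.length, (1 : ℝ) / (((f.1 i : ℕ) : ℝ) ^ (k.get i))

/-- Formal ℚ-linear combinations of indices. -/
abbrev IndexSum := List ℕ →₀ ℚ

/-- An index viewed as a formal sum. -/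
noncomputable def ofIdx (k : List ℕ) : IndexSum := Finsupp.single k 1

/-- ζ extended ℚ-linearly to formal sums of indices. -/
noncomputable def mzvL (x : IndexSum) : ℝ := x.sum fun k c => (c : ℝ) * mzv k

/-- The Ohno sum `O_m(k) = Σ_{|e| = m} ζ(k ⊕ e)`. -/
noncomputable def ohno (m : ℕ) (k : List ℕ) : ℝ :=
  ∑ e ∈ Finset.Nat.antidiagonalTuple k.length m,
    mzv (List.ofFn fun i : Fin k.length => k.get i + e i)

/-- The Ohno sum extended ℚ-linearly to formal sums of indices. -/
noncomputable def ohnoL (m : ℕ) (x : IndexSum) : ℝ := x.sum fun k c => (c : ℝ) * ohno m k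

/-- The multiset of shuffles of two lists. -/
def shuffles : List ℕ → List ℕ → Multiset (List ℕ)
  | [], l => {l}
  | a :: k, [] => {a :: k}
  | a :: k, b :: l =>
      ((shuffles k (b :: l)).map (a :: ·)) + ((shuffles (a :: k) l).map (b :: ·))
  termination_by k l => k.length + l.length

/-- The shuffle product of two indices, as a formal sum of indices. -/
noncomputable def shufL (k l : List ℕ) : IndexSum := ((shuffles k l).map ofIdx).sum

/-- The shuffle product, extended ℚ-bilinearly to formal sums of indices. -/
noncomputable def shuf (x y : IndexSum) : IndexSum :=
  x.sum fun k c => y.sum fun l d => (c * d) • shufL k l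

/-- Encoding of an index as a binary word: an entry `a` becomes the block
`false, true, …, true` with `a - 1` trues. -/
def encodeIdx (k : List ℕ) : List Bool := k.flatMap fun a => false :: List.replicate (a - 1) true

/-- Auxiliary decoder. -/
def decodeAux : List Bool → ℕ → List ℕ
  | [], n => [n]
  | false :: w, n => n :: decodeAux w 1
  | true :: w, n => decodeAux w (n + 1)

/-- Decoding of a binary word into an index. -/
def decodeIdx : List Bool → List ℕ
  | [] => []
  | _ :: w => decodeAux w 1

/-- The dual index `k†`: reverse the binary word of `k` and swap the letters. -/
def dualIdx (k : List ℕ) : List ℕ := decodeIdx (((encodeIdx k).reverse).map (fun b => !b))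

/-- Duality extended termwise to formal sums of indices. -/
noncomputable def dualL (x : IndexSum) : IndexSum := Finsupp.mapDomain dualIdx x

/-- `(a) ⊛ (l₁,…,l_r) = Σ_{i=1}^{r} (l₁,…,l_{i-1}, l_i + a, l_{i+1},…,l_r)`. -/
noncomputable def hastIdx (a : ℕ) (l : List ℕ) : IndexSum :=
  ∑ i : Fin l.length, Finsupp.single (l.set i (l.get i + a)) 1

/-- `⊛` extended ℚ-linearly in the second argument. -/
noncomputable def hast (a : ℕ) (x : IndexSum) : IndexSum := x.sum fun l c => c • hastIdx a l

/-- `Σ_{|e| = m} ζ((a) ⊛ (x ⊕ e))`, where for each index occurring in `x` the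
sequence `e` of nonnegative integers runs over the suitable depth (the depth of
that index) with entry sum `m`, and `⊕ e` is applied termwise. -/
noncomputable def zetaHastSum (a m : ℕ) (x : IndexSum) : ℝ :=
  x.sum fun k c => (c : ℝ) *
    ∑ e ∈ Finset.Nat.antidiagonalTuple k.length m,
      mzvL (hastIdx a (List.ofFn fun i : Fin k.length => k.get i + e i))

/-- Appending an entry `a` to each index occurring in a formal sum. -/
noncomputable def appendL (x : IndexSum) (a : ℕ) : IndexSum :=
  Finsupp.mapDomain (fun k => k ++ [a]) x

/-- `F_{m,l}(s; k) = O_m((s) ⧢ k ⧢ ({2}^l)) − O_m((s) ⧢ (k ⧢ ({2}^l))†)`. -/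
noncomputable def F (m l s : ℕ) (k : List ℕ) : ℝ :=
  ohnoL m (shuf (ofIdx [s]) (shufL k (List.replicate l 2)))
    - ohnoL m (shuf (ofIdx [s]) (dualL (shufL k (List.replicate l 2))))

/-- `D_{m,l}(s,t) = F_{m,l}(s;(t+1)) − F_{m,l}(t;(s+1))`. -/
noncomputable def D (m l s t : ℕ) : ℝ := F m l s [t + 1] - F m l t [s + 1]

lemma mzvL_single (k : List ℕ) (c : ℚ) : mzvL (Finsupp.single k c) = (c : ℝ) * mzv k := by
  simp [mzvL, Finsupp.sum_single_index]

lemma mzvL_add (x y : IndexSum) : mzvL (x + y) = mzvL x + mzvL y := by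
  unfold mzvL
  rw [Finsupp.sum_add_index (by simp) (by intro k _ c d; push_cast; ring)]

lemma ohnoL_single (m : ℕ) (k : List ℕ) (c : ℚ) :
    ohnoL m (Finsupp.single k c) = (c : ℝ) * ohno m k := by
  simp [ohnoL, Finsupp.sum_single_index]

lemma ohnoL_add (m : ℕ) (x y : IndexSum) : ohnoL m (x + y) = ohnoL m x + ohnoL m y := by
  unfold ohnoL
  rw [Finsupp.sum_add_index (by simp) (by intro k _ c d; push_cast; ring)]

/-- `mzvL` as an additive homomorphism. -/
noncomputable def mzvLHom : IndexSum →+ ℝ := AddMonoidHom.mk' mzvL mzvL_add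

/-- `ohnoL m` as an additive homomorphism. -/
noncomputable def ohnoLHom (m : ℕ) : IndexSum →+ ℝ := AddMonoidHom.mk' (ohnoL m) (ohnoL_add m)

lemma mzvL_hastIdx (a : ℕ) (l : List ℕ) :
    mzvL (hastIdx a l) = ∑ i : Fin l.length, mzv (l.set i (l.get i + a)) := by
  rw [hastIdx, show mzvL = ⇑mzvLHom from rfl, map_sum]
  refine Finset.sum_congr rfl fun i _ => ?_
  show mzvL _ = _
  rw [mzvL_single]; simp

lemma ohnoL_hastIdx (m a : ℕ) (l : List ℕ) :
    ohnoL m (hastIdx a l) = ∑ i : Fin l.length, ohno m (l.set i (l.get i + a)) := by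
  rw [hastIdx, show ohnoL m = ⇑(ohnoLHom m) from rfl, map_sum]
  exact Finset.sum_congr rfl fun i _ => by simp [ohnoLHom, ohnoL_single]

lemma ohnoL_smul (m : ℕ) (c : ℚ) (x : IndexSum) : ohnoL m (c • x) = (c : ℝ) * ohnoL m x := by
  unfold ohnoL
  rw [Finsupp.sum_smul_index' (by simp), Finsupp.mul_sum]
  refine Finset.sum_congr rfl fun k _ => ?_
  dsimp only
  rw [smul_eq_mul]
  push_cast
  ring

lemma ohno_cast (m : ℕ) (K : List ℕ) (n : ℕ) (h : K.length = n) :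
    ohno m K = ∑ e ∈ Finset.Nat.antidiagonalTuple n m,
      mzv (List.ofFn fun i : Fin n => K.get (Fin.cast h.symm i) + e i) := by
  subst h; rfl

/-- The key identity: adding `s` to one entry commutes with adding `e` componentwise. -/
lemma zetaHastSum_eq_ohnoL_hast (a m : ℕ) (x : IndexSum) :
    zetaHastSum a m x = ohnoL m (hast a x) := by
  rw [hast, show ohnoL m = ⇑(ohnoLHom m) from rfl, map_finsuppSum]
  unfold zetaHastSum
  refine Finsupp.sum_congr fun k _ => ?_
  have h1 : (ohnoLHom m) ((x k) • hastIdx a k) = ((x k : ℝ)) * ohnoL m (hastIdx a k) :=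
    ohnoL_smul m (x k) (hastIdx a k)
  rw [h1, ohnoL_hastIdx]
  congr 1
  rw [Finset.sum_congr rfl fun (i : Fin k.length) _ =>
    ohno_cast m (k.set (i : ℕ) (k.get i + a)) k.length (by simp)]
  rw [Finset.sum_comm]
  refine Finset.sum_congr rfl fun e _ => ?_
  rw [mzvL_hastIdx]
  have hlen : (List.ofFn fun i : Fin k.length => k.get i + e i).length = k.length :=
    List.length_ofFn
  rw [← Fin.sum_congr' _ hlen.symm]
  refine Finset.sum_congr rfl fun i _ => ?_
  congr 1
  refine List.ext_getElem (by simp) fun p hp1 hp2 => ?_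
  have hpk : p < k.length := by simpa using hp2
  simp only [List.getElem_set, List.getElem_ofFn, List.get_eq_getElem, Fin.coe_cast]
  split_ifs with h
  · subst h; ring
  · ring

/-- For integers `s, t ≥ 1`, `m ≥ 1`, and `l ≥ 0`,
`Σ_{m₁+m₂=m} Σ_{|e|=m₂} ζ((s+m₁) ⊛ (((t+1) ⧢ ({2}^l)) ⊕ e))
  − Σ_{m₁+m₂=m−1} Σ_{|e|=m₂} ζ((s+m₁+1) ⊛ (((t+1) ⧢ ({2}^l)) ⊕ e))
  = O_m((s) ⊛ ((t+1) ⧢ ({2}^l)))`. -/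
theorem statement5 (s t m l : ℕ) (hs : 1 ≤ s) (ht : 1 ≤ t) (hm : 1 ≤ m) :
    (∑ p ∈ Finset.HasAntidiagonal.antidiagonal m,
        zetaHastSum (s + p.1) p.2 (shufL [t + 1] (List.replicate l 2)))
      - ∑ p ∈ Finset.HasAntidiagonal.antidiagonal (m - 1),
          zetaHastSum (s + p.1 + 1) p.2 (shufL [t + 1] (List.replicate l 2))
    = ohnoL m (hast s (shufL [t + 1] (List.replicate l 2))) := by
  obtain ⟨m', rfl⟩ : ∃ m', m = m' + 1 := ⟨m - 1, by omega⟩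
  set X := shufL [t + 1] (List.replicate l 2)
  rw [Finset.Nat.sum_antidiagonal_succ (f := fun p => zetaHastSum (s + p.1) p.2 X)]
  simp only [Nat.add_sub_cancel, add_zero]
  have : ∑ p ∈ Finset.HasAntidiagonal.antidiagonal m', zetaHastSum (s + (p.1 + 1)) p.2 X
      = ∑ p ∈ Finset.HasAntidiagonal.antidiagonal m', zetaHastSum (s + p.1 + 1) p.2 X := by
    refine Finset.sum_congr rfl fun p _ => ?_
    rw [← add_assoc]
  rw [this, add_sub_cancel_right]
  exact zetaHastSum_eq_ohnoL_hast s (m' + 1) X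
end

section
/- For integers l ≥ 1, s ≥ 2, m ≥ 0, and all integers p, q with 1 ≤ p, q ≤ l+1, one has G_{p,q} = H_{p,q}. -/
open scoped BigOperators

lemma ohno_congr (m n : ℕ) (k : List ℕ) (h : k.length = n) (g : Fin n → ℕ)
    (hg : ∀ i : Fin n, k.get (Fin.cast h.symm i) = g i) :
    ohno m k = ∑ e ∈ Finset.Nat.antidiagonalTuple n m,
      mzv (List.ofFn fun i => g i + e i) := by
  revert g hg
  subst h
  intro g hg
  unfold ohno
  refine Finset.sum_congr rfl fun e _ =>
    congrArg mzv (congrArg List.ofFn (funext fun i => ?_))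
  rw [← hg i]
  rfl

lemma core (n m s : ℕ) (p' : Fin n) (c : Fin n → ℕ) :
    ∑ a ∈ Finset.range (m + 1),
      ∑ e ∈ Finset.Nat.antidiagonalTuple n (m - a),
        mzv (List.ofFn fun i => (if i = p' then s + a + c i else c i) + e i)
    = ∑ f ∈ Finset.Nat.antidiagonalTuple n (m + s),
        ((f p' + 1 - s : ℕ) : ℝ) * mzv (List.ofFn fun i => c i + f i) := by
  have hR : ∀ f : Fin n → ℕ, ((f p' + 1 - s : ℕ) : ℝ) * mzv (List.ofFn fun i => c i + f i)
      = ∑ _a ∈ Finset.range (f p' + 1 - s), mzv (List.ofFn fun i => c i + f i) := fun f => by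
    rw [Finset.sum_const, Finset.card_range, nsmul_eq_mul]
  simp only [hR]
  rw [Finset.sum_sigma' (Finset.range (m+1)), Finset.sum_sigma' (Finset.Nat.antidiagonalTuple n (m+s))]
  refine Finset.sum_nbij' (fun x => ⟨Function.update x.2 p' (x.2 p' + s + x.1), x.1⟩)
    (fun y => ⟨y.2, Function.update y.1 p' (y.1 p' - s - y.2)⟩) ?_ ?_ ?_ ?_ ?_
  · rintro ⟨a, e⟩ hx
    simp only [Finset.mem_sigma, Finset.mem_range, Finset.Nat.mem_antidiagonalTuple] at hx ⊢
    obtain ⟨ha, he⟩ := hx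
    have h1 := Finset.sum_update_of_mem (Finset.mem_univ p') e (e p' + s + a)
    have h2 : ∑ i : Fin n, e i = e p' + ∑ i ∈ Finset.univ \ {p'}, e i := by
      rw [← Finset.sum_update_of_mem (Finset.mem_univ p')]
      exact Finset.sum_congr rfl fun i _ => by
        rcases eq_or_ne i p' with rfl | hi
        · rw [Function.update_self]
        · rw [Function.update_of_ne hi]
    constructor
    · rw [h1]; omega
    · rw [Function.update_self]; omega
  · rintro ⟨f, a⟩ hy
    simp only [Finset.mem_sigma, Finset.mem_range, Finset.Nat.mem_antidiagonalTuple] at hy ⊢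
    obtain ⟨hf, ha⟩ := hy
    have hle : f p' ≤ m + s := hf ▸ Finset.single_le_sum (fun i _ => Nat.zero_le _) (Finset.mem_univ p')
    have h1 := Finset.sum_update_of_mem (Finset.mem_univ p') f (f p' - s - a)
    have h2 : ∑ i : Fin n, f i = f p' + ∑ i ∈ Finset.univ \ {p'}, f i := by
      rw [← Finset.sum_update_of_mem (Finset.mem_univ p')]
      exact Finset.sum_congr rfl fun i _ => by
        rcases eq_or_ne i p' with rfl | hi
        · rw [Function.update_self]
        · rw [Function.update_of_ne hi]
    constructor
    · omega
    · rw [h1]; omega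
  · rintro ⟨a, e⟩ hx
    simp only [Function.update_self]
    refine congrArg (Sigma.mk a) (funext fun i => ?_)
    rcases eq_or_ne i p' with rfl | hi
    · simp only [Function.update_self]; omega
    · simp only [Function.update_of_ne hi]
  · rintro ⟨f, a⟩ hy
    simp only [Finset.mem_sigma, Finset.mem_range, Finset.Nat.mem_antidiagonalTuple] at hy
    obtain ⟨hf, ha⟩ := hy
    simp only [Function.update_self]
    refine congrArg (fun u => (⟨u, a⟩ : (_ : Fin n → ℕ) × ℕ)) (funext fun i => ?_)
    rcases eq_or_ne i p' with rfl | hi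
    · simp only [Function.update_self]; omega
    · simp only [Function.update_of_ne hi]
  · rintro ⟨a, e⟩ hx
    refine congrArg mzv (congrArg List.ofFn (funext fun i => ?_))
    rcases eq_or_ne i p' with rfl | hi
    · simp only [eq_self_iff_true, if_true, Function.update_self]; omega
    · simp only [if_neg hi, Function.update_of_ne hi]

/-- For integers `l ≥ 1`, `s ≥ 2`, `m ≥ 0`, and `1 ≤ p, q ≤ l+1`, one has
`G_{p,q} = H_{p,q}`, where
`G_{p,q} = Σ_{a=0}^{m} O_{m−a}({2}^{p−1}, s+a+2, {2}^{q−p−1}, 3, {2}^{l−q+1})` if `p < q`,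
`G_{p,q} = Σ_{a=0}^{m} O_{m−a}({2}^{p−1}, s+a+3, {2}^{l−p+1})` if `p = q`,
`G_{p,q} = Σ_{a=0}^{m} O_{m−a}({2}^{q−1}, 3, {2}^{p−q−1}, s+a+2, {2}^{l−p+1})` if `p > q`, and
`H_{p,q} = Σ_{m₁+⋯+m_{l+1}=m+s} max{m_p−s+1, 0} ·
  ζ(m₁+2, …, m_{q−1}+2, m_q+3, m_{q+1}+2, …, m_{l+1}+2)`. -/
theorem statement10 (l s m p q : ℕ) (hl : 1 ≤ l) (hs : 2 ≤ s)
    (hp : 1 ≤ p) (hp' : p ≤ l + 1) (hq : 1 ≤ q) (hq' : q ≤ l + 1) :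
    (if p < q then
        ∑ a ∈ Finset.range (m + 1),
          ohno (m - a) (List.replicate (p - 1) 2 ++ [s + a + 2] ++
            List.replicate (q - p - 1) 2 ++ [3] ++ List.replicate (l + 1 - q) 2)
      else if p = q then
        ∑ a ∈ Finset.range (m + 1),
          ohno (m - a) (List.replicate (p - 1) 2 ++ [s + a + 3] ++
            List.replicate (l + 1 - p) 2)
      else
        ∑ a ∈ Finset.range (m + 1),
          ohno (m - a) (List.replicate (q - 1) 2 ++ [3] ++
            List.replicate (p - q - 1) 2 ++ [s + a + 2] ++ List.replicate (l + 1 - p) 2))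
    = ∑ f ∈ Finset.Nat.antidiagonalTuple (l + 1) (m + s),
        ((f ⟨p - 1, by omega⟩ + 1 - s : ℕ) : ℝ) *
          mzv (List.ofFn fun i : Fin (l + 1) =>
            if (i : ℕ) = q - 1 then f i + 3 else f i + 2) := by
  
  set p' : Fin (l + 1) := ⟨p - 1, by omega⟩ with hp'def
  set c : Fin (l + 1) → ℕ := fun i => if (i : ℕ) = q - 1 then 3 else 2 with hcdef
  have hiff : ∀ i : Fin (l + 1), (i = p') ↔ ((i : ℕ) = p - 1) := fun i => by
    simp [hp'def, Fin.ext_iff]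
  have hfinal : ∀ f ∈ Finset.Nat.antidiagonalTuple (l+1) (m+s),
      ((f p' + 1 - s : ℕ) : ℝ) * mzv (List.ofFn fun i => c i + f i)
      = ((f p' + 1 - s : ℕ) : ℝ) *
          mzv (List.ofFn fun i : Fin (l + 1) =>
            if (i : ℕ) = q - 1 then f i + 3 else f i + 2) := by
    intro f _
    refine congrArg _ (congrArg mzv (congrArg List.ofFn (funext fun i => ?_)))
    simp only [hcdef]
    split_ifs <;> omega
  rcases lt_trichotomy p q with hpq | hpq | hpq
  · rw [if_pos hpq]
    have hlen : ∀ a : ℕ, (List.replicate (p - 1) 2 ++ [s + a + 2] ++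
        List.replicate (q - p - 1) 2 ++ [3] ++ List.replicate (l + 1 - q) 2).length = l + 1 := by
      intro a; simp; omega
    calc ∑ a ∈ Finset.range (m + 1),
          ohno (m - a) (List.replicate (p - 1) 2 ++ [s + a + 2] ++
            List.replicate (q - p - 1) 2 ++ [3] ++ List.replicate (l + 1 - q) 2)
        = ∑ a ∈ Finset.range (m + 1), ∑ e ∈ Finset.Nat.antidiagonalTuple (l+1) (m - a),
            mzv (List.ofFn fun i => (if i = p' then s + a + c i else c i) + e i) := by
          refine Finset.sum_congr rfl fun a _ => ohno_congr _ _ _ (hlen a) _ fun i => ?_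
          simp only [List.get_eq_getElem, Fin.coe_cast, List.getElem_append,
            List.getElem_replicate, List.length_append, List.length_replicate,
            List.length_cons, List.length_nil, List.getElem_singleton, hiff, hcdef]
          split_ifs <;> omega
      _ = _ := core (l+1) m s p' c
      _ = _ := Finset.sum_congr rfl hfinal
  · rw [if_neg (by omega), if_pos hpq]
    have hlen : ∀ a : ℕ, (List.replicate (p - 1) 2 ++ [s + a + 3] ++
        List.replicate (l + 1 - p) 2).length = l + 1 := by
      intro a; simp; omega
    calc ∑ a ∈ Finset.range (m + 1),
          ohno (m - a) (List.replicate (p - 1) 2 ++ [s + a + 3] ++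
            List.replicate (l + 1 - p) 2)
        = ∑ a ∈ Finset.range (m + 1), ∑ e ∈ Finset.Nat.antidiagonalTuple (l+1) (m - a),
            mzv (List.ofFn fun i => (if i = p' then s + a + c i else c i) + e i) := by
          refine Finset.sum_congr rfl fun a _ => ohno_congr _ _ _ (hlen a) _ fun i => ?_
          simp only [List.get_eq_getElem, Fin.coe_cast, List.getElem_append,
            List.getElem_replicate, List.length_append, List.length_replicate,
            List.length_cons, List.length_nil, List.getElem_singleton, hiff, hcdef]
          split_ifs <;> omega
      _ = _ := core (l+1) m s p' c
      _ = _ := Finset.sum_congr rfl hfinal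
  · rw [if_neg (by omega), if_neg (by omega)]
    have hlen : ∀ a : ℕ, (List.replicate (q - 1) 2 ++ [3] ++
        List.replicate (p - q - 1) 2 ++ [s + a + 2] ++ List.replicate (l + 1 - p) 2).length = l + 1 := by
      intro a; simp; omega
    calc ∑ a ∈ Finset.range (m + 1),
          ohno (m - a) (List.replicate (q - 1) 2 ++ [3] ++
            List.replicate (p - q - 1) 2 ++ [s + a + 2] ++ List.replicate (l + 1 - p) 2)
        = ∑ a ∈ Finset.range (m + 1), ∑ e ∈ Finset.Nat.antidiagonalTuple (l+1) (m - a),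
            mzv (List.ofFn fun i => (if i = p' then s + a + c i else c i) + e i) := by
          refine Finset.sum_congr rfl fun a _ => ohno_congr _ _ _ (hlen a) _ fun i => ?_
          simp only [List.get_eq_getElem, Fin.coe_cast, List.getElem_append,
            List.getElem_replicate, List.length_append, List.length_replicate,
            List.length_cons, List.length_nil, List.getElem_singleton, hiff, hcdef]
          split_ifs <;> omega
      _ = _ := core (l+1) m s p' c
      _ = _ := Finset.sum_congr rfl hfinal
end

section
/- For integers s, t ≥ 3 and l, m ≥ 0, one has O_m((s−1) ⊛ ((t+1) ⧢ ({2}^l))) = O_m((t−1) ⊛ ((s+1) ⧢ ({2}^l))). -/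
open scoped BigOperators

section Aux

lemma hast_add (a : ℕ) (x y : IndexSum) : hast a (x + y) = hast a x + hast a y := by
  unfold hast
  apply Finsupp.sum_add_index' <;> intros <;> simp [add_smul]

lemma hast_single (a : ℕ) (k : List ℕ) : hast a (ofIdx k) = hastIdx a k := by
  unfold hast ofIdx
  rw [Finsupp.sum_single_index] <;> simp

lemma hast_sum (a : ℕ) {ι : Type} (S : Finset ι) (g : ι → IndexSum) :
    hast a (∑ i ∈ S, g i) = ∑ i ∈ S, hast a (g i) :=
  map_sum (AddMonoidHom.mk' (hast a) (hast_add a)) g S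

lemma hastIdx_eq_range (a : ℕ) (k : List ℕ) :
    hastIdx a k = ∑ j ∈ Finset.range k.length,
      Finsupp.single (k.set j (k.getD j 0 + a)) (1:ℚ) := by
  unfold hastIdx
  rw [← Fin.sum_univ_eq_sum_range]
  apply Finset.sum_congr rfl
  intro j _
  congr 2
  rw [List.get_eq_getElem, List.getD_eq_getElem _ _ j.isLt]

lemma multiset_range_succ' (n : ℕ) :
    Multiset.range (n + 1) = 0 ::ₘ (Multiset.range n).map (· + 1) := by
  simp [Multiset.range, List.range_succ_eq_map]

lemma shuffles_single_replicate (a c l : ℕ) :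
    shuffles [a] (List.replicate l c)
      = (Multiset.range (l + 1)).map (fun i => (List.replicate (l + 1) c).set i a) := by
  induction l with
  | zero => simp [shuffles]
  | succ n ih =>
      rw [List.replicate_succ, shuffles, shuffles, ih, multiset_range_succ' (n+1),
        Multiset.map_cons, Multiset.map_map]
      simp [List.replicate_succ, Multiset.singleton_add, Multiset.map_map, Function.comp]
      rw [Multiset.cons_swap]
      rfl

lemma shufL_single_replicate (a c l : ℕ) :
    shufL [a] (List.replicate l c)
      = ∑ i ∈ Finset.range (l + 1), ofIdx ((List.replicate (l + 1) c).set i a) := by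
  rw [shufL, shuffles_single_replicate, Multiset.map_map]
  rw [Finset.sum]
  rfl

lemma hast_shuf (u v l : ℕ) (hu : 1 ≤ u) :
    hast (u - 1) (shufL [v + 1] (List.replicate l 2))
      = ∑ i ∈ Finset.range (l + 1), ∑ j ∈ Finset.range (l + 1),
          Finsupp.single (if j = i then (List.replicate (l + 1) 2).set i (u + v)
            else ((List.replicate (l + 1) 2).set i (v + 1)).set j (u + 1)) (1 : ℚ) := by
  rw [shufL_single_replicate, hast_sum]
  apply Finset.sum_congr rfl
  intro i hi
  rw [hast_single, hastIdx_eq_range]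
  have hlen : ((List.replicate (l + 1) 2).set i (v + 1)).length = l + 1 := by simp
  rw [hlen]
  apply Finset.sum_congr rfl
  intro j hj
  simp only [Finset.mem_range] at hi hj
  have hget : ((List.replicate (l + 1) 2).set i (v + 1)).getD j 0
      = if i = j then v + 1 else 2 := by
    rw [List.getD_eq_getElem _ _ (by simpa using hj), List.getElem_set]
    split <;> simp
  by_cases h : j = i
  · subst h
    rw [hget, if_pos rfl, if_pos rfl, List.set_set]
    congr 2
    omega
  · rw [hget, if_neg (Ne.symm h), if_neg h]
    congr 2
    omega

lemma key_finsupp (s t l : ℕ) (hs : 1 ≤ s) (ht : 1 ≤ t) :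
    hast (s - 1) (shufL [t + 1] (List.replicate l 2))
      = hast (t - 1) (shufL [s + 1] (List.replicate l 2)) := by
  rw [hast_shuf s t l hs, hast_shuf t s l ht, Finset.sum_comm]
  apply Finset.sum_congr rfl
  intro i _
  apply Finset.sum_congr rfl
  intro j _
  by_cases h : i = j
  · subst h
    rw [if_pos rfl, if_pos rfl, Nat.add_comm s t]
  · rw [if_neg h, if_neg (Ne.symm h), List.set_comm _ _ (Ne.symm h)]

end Aux

/-- For integers `s, t ≥ 3` and `l, m ≥ 0`,
`O_m((s−1) ⊛ ((t+1) ⧢ ({2}^l))) = O_m((t−1) ⊛ ((s+1) ⧢ ({2}^l)))`. -/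
theorem statement14 (s t l m : ℕ) (hs : 3 ≤ s) (ht : 3 ≤ t) :
    ohnoL m (hast (s - 1) (shufL [t + 1] (List.replicate l 2)))
      = ohnoL m (hast (t - 1) (shufL [s + 1] (List.replicate l 2))) := by
  rw [key_finsupp s t l (by omega) (by omega)]
end

section
/- For integers s ≥ 2 and m, l ≥ 0, one has Σ_{a=0}^{m} ( O_{m−a}((s+a+3) ⧢ ({2}^l)) + O_{m−a}((s+a+2) ⧢ (3) ⧢ ({2}^{l−1})) ) = Σ_{m_1+⋯+m_{l+1}=m+s, m_i≥0} ( Σ_{p=1}^{l+1} max{m_p−s+1, 0} ) · Σ_{i=1}^{l+1} ζ(m_1+2, …, m_{i−1}+2, m_i+3, m_{i+1}+2, …, m_{l+1}+2), where for l = 0 the term involving ({2}^{l−1}) is understood to be 0. -/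
open scoped BigOperators

-- auxiliary lemmas: Finsupp layer
lemma ohnoL_zero (m : ℕ) : ohnoL m 0 = 0 := by simp [ohnoL]

lemma ohnoL_ofIdx (m : ℕ) (k : List ℕ) : ohnoL m (ofIdx k) = ohno m k := by
  unfold ohnoL ofIdx
  rw [Finsupp.sum_single_index] <;> simp

lemma ohnoL_msum (m : ℕ) (t : Multiset (List ℕ)) :
    ohnoL m ((t.map ofIdx).sum) = (t.map (ohno m)).sum := by
  induction t using Multiset.induction with
  | empty => simp [ohnoL_zero]
  | cons a t ih => simp [ohnoL_add, ohnoL_ofIdx, ih]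

lemma shuf_ofIdx (k : List ℕ) (y : IndexSum) :
    shuf (ofIdx k) y = y.sum fun u d => d • shufL k u := by
  unfold shuf ofIdx
  rw [Finsupp.sum_single_index] <;> simp

lemma shuf_ofIdx_add (k : List ℕ) (y z : IndexSum) :
    shuf (ofIdx k) (y + z) = shuf (ofIdx k) y + shuf (ofIdx k) z := by
  rw [shuf_ofIdx, shuf_ofIdx, shuf_ofIdx]
  exact Finsupp.sum_add_index' (by simp) (fun u d e => add_smul d e _)

lemma shuf_ofIdx_ofIdx (k u : List ℕ) : shuf (ofIdx k) (ofIdx u) = shufL k u := by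
  rw [shuf_ofIdx]
  unfold ofIdx
  rw [Finsupp.sum_single_index] <;> simp

lemma shuf_ofIdx_zero (k : List ℕ) : shuf (ofIdx k) 0 = 0 := by
  rw [shuf_ofIdx]; simp

lemma ohnoL_shuf_msum (m : ℕ) (k : List ℕ) (t : Multiset (List ℕ)) :
    ohnoL m (shuf (ofIdx k) ((t.map ofIdx).sum))
      = (t.map (fun u => ((shuffles k u).map (ohno m)).sum)).sum := by
  induction t using Multiset.induction with
  | empty => simp [shuf_ofIdx_zero, ohnoL_zero]
  | cons a t ih =>
      simp only [Multiset.map_cons, Multiset.sum_cons, shuf_ofIdx_add, ohnoL_add,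
        shuf_ofIdx_ofIdx, ih]
      rw [shufL, ohnoL_msum]
lemma shuffles_singleton (x : ℕ) : ∀ w : List ℕ,
    shuffles [x] w = ((List.range (w.length + 1)).map fun i => w.insertIdx i x : List (List ℕ))
  | [] => by
      rw [shuffles]
      rfl
  | b :: w => by
      rw [shuffles]
      rw [shuffles_singleton x w]
      simp [shuffles, List.range_succ_eq_map, List.map_map, Function.comp_def,
        List.insertIdx_succ_cons]

lemma msum_range {α : Type*} [AddCommMonoid α] (n : ℕ) (g : ℕ → α) :
    ((((List.range n).map g : List α) : Multiset α)).sum = ∑ i ∈ Finset.range n, g i := by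
  induction n with
  | zero => simp
  | succ n ih => simp [List.range_succ, Finset.sum_range_succ, ← ih]
lemma insertIdx_ofFn (x : ℕ) : ∀ (i l : ℕ) (g : ℕ → ℕ), i ≤ l →
    List.insertIdx (List.ofFn fun t : Fin l => g t) i x =
      List.ofFn (fun t : Fin (l + 1) =>
        if (t : ℕ) < i then g t else if (t : ℕ) = i then x else g ((t : ℕ) - 1))
  | 0, l, g, _ => by
      simp [List.ofFn_succ]
  | (i+1), 0, g, h => by omega
  | (i+1), (l+1), g, h => by
      rw [List.ofFn_succ, List.insertIdx_succ_cons]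
      have ih := insertIdx_ofFn x i l (fun n => g (n + 1)) (by omega)
      rw [List.ofFn_succ (f := fun t : Fin (l + 1 + 1) =>
        if (t : ℕ) < i + 1 then g t else if (t : ℕ) = i + 1 then x else g ((t : ℕ) - 1))]
      simp only [Fin.val_zero, Fin.val_succ]
      simp only [Nat.zero_lt_succ, ↓reduceIte]
      congr 1
      rw [show (List.ofFn fun t : Fin l => g (↑t + 1)) =
        (List.ofFn fun t : Fin l => (fun n => g (n+1)) ↑t) from rfl] at *
      rw [ih]
      congr 1
      funext t
      rcases Nat.lt_trichotomy (t : ℕ) i with h' | h' | h'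
      · rw [if_pos h', if_pos (by omega : (t : ℕ) + 1 < i + 1)]
      · rw [if_neg (by omega), if_pos h', if_neg (by omega), if_pos (by omega)]
      · rw [if_neg (by omega), if_neg (by omega), if_neg (by omega), if_neg (by omega)]
        show g ((t : ℕ) - 1 + 1) = g ((t : ℕ) + 1 - 1)
        congr 1
        omega
lemma ohno_eq_of_get {n M : ℕ} (k : List ℕ) (h : k.length = n) (v : Fin n → ℕ)
    (hv : ∀ i : Fin k.length, k.get i = v (Fin.cast h i)) :
    ohno M k = ∑ e ∈ Finset.Nat.antidiagonalTuple n M,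
      mzv (List.ofFn fun t : Fin n => v t + e t) := by
  subst h
  unfold ohno
  refine Finset.sum_congr rfl fun e _ => ?_
  refine congrArg mzv (List.ofFn_inj.mpr ?_)
  funext t
  rw [hv t]
  rfl

lemma ohno_ofFn {n : ℕ} (M : ℕ) (v : Fin n → ℕ) :
    ohno M (List.ofFn v) = ∑ e ∈ Finset.Nat.antidiagonalTuple n M,
      mzv (List.ofFn fun t : Fin n => v t + e t) :=
  ohno_eq_of_get _ (List.length_ofFn (f := v)) v (fun i => by rw [List.get_ofFn])

/-- `mzv` of an index `h ⊕ (2,…,2)`. -/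
noncomputable def Zf (n : ℕ) (h : Fin n → ℕ) : ℝ := mzv (List.ofFn fun t => h t + 2)

lemma sum_ite_eq_fin {n : ℕ} (i : Fin n) (c : ℕ) :
    (∑ t : Fin n, if t = i then c else 0) = c := by
  simp [Finset.sum_ite_eq' Finset.univ i fun _ => c]

lemma fin_le_sum {n : ℕ} (h : Fin n → ℕ) (i : Fin n) : h i ≤ ∑ t, h t :=
  Finset.single_le_sum (fun t _ => Nat.zero_le (h t)) (Finset.mem_univ i)
lemma partA (s m n : ℕ) :
    (∑ a ∈ Finset.range (m + 1), ∑ i : Fin n,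
        ∑ e ∈ Finset.Nat.antidiagonalTuple n (m - a),
          Zf n (fun t => e t + if t = i then s + a + 1 else 0))
      = ∑ h ∈ Finset.Nat.antidiagonalTuple n (m + s + 1),
          (∑ i : Fin n, (h i - s)) • Zf n h := by
  rw [Finset.sum_comm]
  have inner : ∀ i : Fin n,
      (∑ a ∈ Finset.range (m + 1), ∑ e ∈ Finset.Nat.antidiagonalTuple n (m - a),
        Zf n (fun t => e t + if t = i then s + a + 1 else 0))
      = ∑ h ∈ Finset.Nat.antidiagonalTuple n (m + s + 1), (h i - s) • Zf n h := by
    intro i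
    rw [Finset.sum_sigma' (Finset.range (m + 1))
      (fun a => Finset.Nat.antidiagonalTuple n (m - a))]
    have hconst : ∀ h : Fin n → ℕ,
        (h i - s) • Zf n h = ∑ _a ∈ Finset.range (h i - s), Zf n h := by
      intro h; rw [Finset.sum_const, Finset.card_range]
    simp_rw [hconst]
    rw [Finset.sum_sigma' (Finset.Nat.antidiagonalTuple n (m + s + 1))
      (fun h => Finset.range (h i - s))]
    refine Finset.sum_nbij'
      (i := fun p => ⟨fun t => p.2 t + if t = i then s + p.1 + 1 else 0, p.1⟩)
      (j := fun p => ⟨p.2, fun t => p.1 t - if t = i then s + p.2 + 1 else 0⟩)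
      ?_ ?_ ?_ ?_ ?_
    · rintro ⟨a, e⟩ hp
      simp only [Finset.mem_sigma, Finset.mem_range,
        Finset.Nat.mem_antidiagonalTuple] at hp ⊢
      obtain ⟨ha, he⟩ := hp
      refine ⟨?_, ?_⟩
      · rw [Finset.sum_add_distrib, he, sum_ite_eq_fin]
        omega
      · simp only [if_true]
        omega
    · rintro ⟨h, a⟩ hp
      simp only [Finset.mem_sigma, Finset.mem_range,
        Finset.Nat.mem_antidiagonalTuple] at hp ⊢
      obtain ⟨hh, ha⟩ := hp
      have hle := fin_le_sum h i
      refine ⟨by omega, ?_⟩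
      rw [Finset.sum_tsub_distrib _ (fun t _ => by
        by_cases ht : t = i <;> simp [ht] <;> omega), hh, sum_ite_eq_fin]
      omega
    · rintro ⟨a, e⟩ hp
      simp only [Finset.mem_sigma, Finset.mem_range,
        Finset.Nat.mem_antidiagonalTuple] at hp
      have he : (fun t => (e t + if t = i then s + a + 1 else 0)
          - if t = i then s + a + 1 else 0) = e := by
        funext t
        by_cases ht : t = i <;> simp [ht]
      simp only [he]
    · rintro ⟨h, a⟩ hp
      simp only [Finset.mem_sigma, Finset.mem_range,
        Finset.Nat.mem_antidiagonalTuple] at hp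
      have he : (fun t => (h t - if t = i then s + a + 1 else 0)
          + if t = i then s + a + 1 else 0) = h := by
        funext t
        by_cases ht : t = i <;> simp [ht]
        omega
      simp only [he]
    · rintro ⟨a, e⟩ _
      rfl
  rw [Finset.sum_congr rfl fun i _ => inner i, Finset.sum_comm]
  exact Finset.sum_congr rfl fun h _ => (Finset.sum_smul).symm
lemma two_le_sum {n : ℕ} (h : Fin n → ℕ) {i q : Fin n} (hiq : q ≠ i) :
    h i + h q ≤ ∑ t, h t := by
  rw [← Finset.add_sum_erase _ h (Finset.mem_univ q)]
  have : h i ≤ ∑ t ∈ Finset.univ.erase q, h t :=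
    Finset.single_le_sum (fun t _ => Nat.zero_le (h t))
      (Finset.mem_erase.2 ⟨fun hc => hiq (hc ▸ rfl), Finset.mem_univ i⟩)
  omega

lemma partB_inner (s m n : ℕ) (i q : Fin n) (hiq : q ≠ i) :
    (∑ a ∈ Finset.range (m + 1), ∑ e ∈ Finset.Nat.antidiagonalTuple n (m - a),
        Zf n (fun t => e t + (if t = i then s + a else 0) + (if t = q then 1 else 0)))
      = ∑ h ∈ Finset.Nat.antidiagonalTuple n (m + s + 1),
          (if 1 ≤ h q then h i + 1 - s else 0) • Zf n h := by
  have hqi : i ≠ q := Ne.symm hiq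
  rw [Finset.sum_sigma' (Finset.range (m + 1))
    (fun a => Finset.Nat.antidiagonalTuple n (m - a))]
  have hconst : ∀ h : Fin n → ℕ,
      (if 1 ≤ h q then h i + 1 - s else 0) • Zf n h
        = ∑ _a ∈ Finset.range (if 1 ≤ h q then h i + 1 - s else 0), Zf n h := by
    intro h; rw [Finset.sum_const, Finset.card_range]
  simp_rw [hconst]
  rw [Finset.sum_sigma' (Finset.Nat.antidiagonalTuple n (m + s + 1))
    (fun h => Finset.range (if 1 ≤ h q then h i + 1 - s else 0))]
  refine Finset.sum_nbij'
    (i := fun p => ⟨fun t => p.2 t + (if t = i then s + p.1 else 0)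
      + (if t = q then 1 else 0), p.1⟩)
    (j := fun p => ⟨p.2, fun t => p.1 t - (if t = i then s + p.2 else 0)
      - (if t = q then 1 else 0)⟩)
    ?_ ?_ ?_ ?_ ?_
  · rintro ⟨a, e⟩ hp
    simp only [Finset.mem_sigma, Finset.mem_range,
      Finset.Nat.mem_antidiagonalTuple] at hp ⊢
    obtain ⟨ha, he⟩ := hp
    refine ⟨?_, ?_⟩
    · rw [Finset.sum_add_distrib, Finset.sum_add_distrib, he,
        sum_ite_eq_fin, sum_ite_eq_fin]
      omega
    · simp only [if_true, if_pos rfl, if_true, if_neg hiq, if_neg hqi, add_zero]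
      rw [if_pos (Nat.le_add_left 1 _)]
      omega
  · rintro ⟨h, a⟩ hp
    simp only [Finset.mem_sigma, Finset.mem_range,
      Finset.Nat.mem_antidiagonalTuple] at hp ⊢
    obtain ⟨hh, ha⟩ := hp
    have hcond : 1 ≤ h q ∧ s + a ≤ h i := by
      by_cases hc : 1 ≤ h q
      · rw [if_pos hc] at ha; exact ⟨hc, by omega⟩
      · rw [if_neg hc] at ha; omega
    have hsum := two_le_sum h hiq
    refine ⟨by omega, ?_⟩
    rw [Finset.sum_tsub_distrib _ (fun t _ => by
      by_cases ht : t = q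
      · simp only [ht, if_pos rfl, if_true, if_neg hiq]
        omega
      · simp [ht])]
    rw [Finset.sum_tsub_distrib _ (fun t _ => by
      by_cases ht : t = i
      · simp only [ht, if_pos rfl, if_true]
        omega
      · simp [ht])]
    rw [hh, sum_ite_eq_fin, sum_ite_eq_fin]
    omega
  · rintro ⟨a, e⟩ hp
    have he : (fun t => (e t + (if t = i then s + a else 0) + (if t = q then 1 else 0))
        - (if t = i then s + a else 0) - (if t = q then 1 else 0)) = e := by
      funext t
      by_cases ht : t = i
      · simp only [ht, if_pos rfl, if_true, if_neg hqi]
        omega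
      · by_cases ht' : t = q
        · simp only [ht', if_pos rfl, if_true, if_neg hiq]
          omega
        · simp [ht, ht']
    simp only [he]
  · rintro ⟨h, a⟩ hp
    simp only [Finset.mem_sigma, Finset.mem_range,
      Finset.Nat.mem_antidiagonalTuple] at hp
    obtain ⟨hh, ha⟩ := hp
    have hcond : 1 ≤ h q ∧ s + a ≤ h i := by
      by_cases hc : 1 ≤ h q
      · rw [if_pos hc] at ha; exact ⟨hc, by omega⟩
      · rw [if_neg hc] at ha; omega
    have he : (fun t => (h t - (if t = i then s + a else 0) - (if t = q then 1 else 0))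
        + (if t = i then s + a else 0) + (if t = q then 1 else 0)) = h := by
      funext t
      by_cases ht : t = i
      · simp only [ht, if_pos rfl, if_true, if_neg hqi]
        omega
      · by_cases ht' : t = q
        · simp only [ht', if_pos rfl, if_true, if_neg hiq]
          omega
        · simp [ht, ht']
    simp only [he]
  · rintro ⟨a, e⟩ _
    rfl
/-- Position in `Fin (l+2)` of the entry `3` after inserting the big entry at `i`. -/
def Qmap {l : ℕ} (q' : Fin (l + 1)) (i : Fin (l + 2)) : Fin (l + 2) :=
  if (q' : ℕ) < (i : ℕ) then q'.castSucc else q'.succ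

lemma Qmap_ne {l : ℕ} (q' : Fin (l + 1)) (i : Fin (l + 2)) : Qmap q' i ≠ i := by
  unfold Qmap
  split <;> (intro hc; rw [Fin.ext_iff] at hc; simp at hc; omega)

lemma pair_sum (l : ℕ) (G : Fin (l + 2) → Fin (l + 2) → ℕ) :
    (∑ q' : Fin (l + 1), ∑ i : Fin (l + 2), G i (Qmap q' i))
      = ∑ q : Fin (l + 2), ∑ i ∈ Finset.univ.erase q, G i q := by
  rw [Finset.sum_sigma' Finset.univ (fun _ : Fin (l + 1) => (Finset.univ : Finset (Fin (l + 2))))]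
  rw [Finset.sum_sigma' Finset.univ (fun q : Fin (l + 2) => Finset.univ.erase q)]
  refine Finset.sum_nbij'
    (i := fun p => ⟨Qmap p.1 p.2, p.2⟩)
    (j := fun p => ⟨if h : (p.1 : ℕ) < (p.2 : ℕ)
        then ⟨(p.1 : ℕ), by omega⟩
        else ⟨(p.1 : ℕ) - 1, by have := p.1.isLt; omega⟩, p.2⟩)
    ?_ ?_ ?_ ?_ ?_
  · rintro ⟨q', i⟩ _
    simp only [Finset.mem_sigma, Finset.mem_univ, Finset.mem_erase, and_true, true_and]
    exact Ne.symm (Qmap_ne q' i)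
  · rintro ⟨q, i⟩ _
    simp [Finset.mem_sigma]
  · rintro ⟨q', i⟩ _
    have hq := q'.isLt
    have hi := i.isLt
    unfold Qmap
    by_cases hlt : (q' : ℕ) < (i : ℕ)
    · simp only [if_pos hlt]
      have : ((q'.castSucc : Fin (l + 2)) : ℕ) < (i : ℕ) := by simpa using hlt
      simp only [dif_pos this]
      congr 1
    · simp only [if_neg hlt]
      have h2 : ¬ ((q'.succ : Fin (l + 2)) : ℕ) < (i : ℕ) := by simp; omega
      simp only [dif_neg h2]
      congr 1
  · rintro ⟨q, i⟩ hp
    simp only [Finset.mem_sigma, Finset.mem_univ, Finset.mem_erase, true_and] at hp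
    have hne : (i : ℕ) ≠ (q : ℕ) := fun hc => hp.1 (Fin.ext hc)
    have hq := q.isLt
    have hi := i.isLt
    by_cases hlt : (q : ℕ) < (i : ℕ)
    · simp only [dif_pos hlt]
      congr 1
      unfold Qmap
      rw [if_pos (by simpa using hlt)]
      exact Fin.ext (by simp)
    · simp only [dif_neg hlt]
      congr 1
      unfold Qmap
      rw [if_neg (by simp; omega)]
      exact Fin.ext (by simp; omega)
  · rintro ⟨q', i⟩ _
    rfl
lemma partB (s m l : ℕ) :
    (∑ a ∈ Finset.range (m + 1), ∑ q' : Fin (l + 1), ∑ i : Fin (l + 2),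
        ∑ e ∈ Finset.Nat.antidiagonalTuple (l + 2) (m - a),
          Zf (l + 2) (fun t => e t + (if t = i then s + a else 0)
            + (if t = Qmap q' i then 1 else 0)))
      = ∑ h ∈ Finset.Nat.antidiagonalTuple (l + 2) (m + s + 1),
          (∑ q ∈ Finset.univ.filter fun q => 1 ≤ h q,
            ∑ i ∈ Finset.univ.erase q, (h i + 1 - s)) • Zf (l + 2) h := by
  rw [Finset.sum_comm]
  have step1 : ∀ q' : Fin (l + 1),
      (∑ a ∈ Finset.range (m + 1), ∑ i : Fin (l + 2),
        ∑ e ∈ Finset.Nat.antidiagonalTuple (l + 2) (m - a),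
          Zf (l + 2) (fun t => e t + (if t = i then s + a else 0)
            + (if t = Qmap q' i then 1 else 0)))
        = ∑ h ∈ Finset.Nat.antidiagonalTuple (l + 2) (m + s + 1),
            (∑ i : Fin (l + 2), if 1 ≤ h (Qmap q' i) then h i + 1 - s else 0)
              • Zf (l + 2) h := by
    intro q'
    rw [Finset.sum_comm]
    rw [Finset.sum_congr rfl fun i _ =>
      partB_inner s m (l + 2) i (Qmap q' i) (Qmap_ne q' i)]
    rw [Finset.sum_comm]
    exact Finset.sum_congr rfl fun h _ => (Finset.sum_smul).symm
  rw [Finset.sum_congr rfl fun q' _ => step1 q', Finset.sum_comm]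
  refine Finset.sum_congr rfl fun h _ => ?_
  rw [← Finset.sum_smul]
  congr 1
  rw [pair_sum l (fun i q => if 1 ≤ h q then h i + 1 - s else 0)]
  rw [Finset.sum_filter]
  refine Finset.sum_congr rfl fun q _ => ?_
  by_cases hc : 1 ≤ h q <;> simp [hc]

lemma partC (s m n : ℕ) :
    (∑ f ∈ Finset.Nat.antidiagonalTuple n (m + s), ∑ i : Fin n,
        (∑ p : Fin n, (f p + 1 - s)) • Zf n (fun j => f j + if j = i then 1 else 0))
      = ∑ h ∈ Finset.Nat.antidiagonalTuple n (m + s + 1),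
          (∑ i ∈ Finset.univ.filter fun i => 1 ≤ h i,
            ∑ p : Fin n, ((h p - if p = i then 1 else 0) + 1 - s)) • Zf n h := by
  rw [Finset.sum_sigma' (Finset.Nat.antidiagonalTuple n (m + s)) (fun _ => Finset.univ)]
  have hsplit : ∀ h : Fin n → ℕ,
      (∑ i ∈ Finset.univ.filter fun i => 1 ≤ h i,
        ∑ p : Fin n, ((h p - if p = i then 1 else 0) + 1 - s)) • Zf n h
      = ∑ i ∈ Finset.univ.filter (fun i => 1 ≤ h i),
          (∑ p : Fin n, ((h p - if p = i then 1 else 0) + 1 - s)) • Zf n h := by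
    intro h; exact Finset.sum_smul
  simp_rw [hsplit]
  rw [Finset.sum_sigma' (Finset.Nat.antidiagonalTuple n (m + s + 1))
    (fun h => Finset.univ.filter fun i => 1 ≤ h i)]
  refine Finset.sum_nbij'
    (i := fun p => ⟨fun j => p.1 j + if j = p.2 then 1 else 0, p.2⟩)
    (j := fun p => ⟨fun j => p.1 j - if j = p.2 then 1 else 0, p.2⟩)
    ?_ ?_ ?_ ?_ ?_
  · rintro ⟨f, i⟩ hp
    simp only [Finset.mem_sigma, Finset.mem_univ, Finset.mem_filter, and_true, true_and,
      Finset.Nat.mem_antidiagonalTuple] at hp ⊢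
    refine ⟨?_, ?_⟩
    · rw [Finset.sum_add_distrib, hp, sum_ite_eq_fin]
    · simp only [if_pos rfl, if_true]
      omega
  · rintro ⟨h, i⟩ hp
    simp only [Finset.mem_sigma, Finset.mem_univ, Finset.mem_filter, and_true, true_and,
      Finset.Nat.mem_antidiagonalTuple] at hp ⊢
    obtain ⟨hh, hi⟩ := hp
    rw [Finset.sum_tsub_distrib _ (fun t _ => by
      by_cases ht : t = i <;> simp [ht] <;> omega)]
    rw [hh, sum_ite_eq_fin]
    omega
  · rintro ⟨f, i⟩ hp
    have he : (fun j => (f j + if j = i then 1 else 0) - if j = i then 1 else 0) = f := by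
      funext j; by_cases hj : j = i <;> simp [hj]
    simp only [he]
  · rintro ⟨h, i⟩ hp
    simp only [Finset.mem_sigma, Finset.mem_univ, Finset.mem_filter, true_and,
      Finset.Nat.mem_antidiagonalTuple] at hp
    have he : (fun j => (h j - if j = i then 1 else 0) + if j = i then 1 else 0) = h := by
      funext j
      by_cases hj : j = i
      · simp only [hj, if_pos rfl, if_true]
        have := hp.2
        omega
      · simp [hj]
    simp only [he]
  · rintro ⟨f, i⟩ _
    refine congrArg₂ _ ?_ rfl
    refine Finset.sum_congr rfl fun p _ => ?_
    by_cases hpi : p = i <;> simp [hpi]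

lemma coeffD (s n : ℕ) (h : Fin n → ℕ) :
    ((∑ i : Fin n, (h i - s)) +
      ∑ q ∈ Finset.univ.filter fun q => 1 ≤ h q,
        ∑ i ∈ Finset.univ.erase q, (h i + 1 - s))
      = ∑ i ∈ Finset.univ.filter fun i => 1 ≤ h i,
          ∑ p : Fin n, ((h p - if p = i then 1 else 0) + 1 - s) := by
  have hsplit : ∀ i ∈ Finset.univ.filter fun i => 1 ≤ h i,
      (∑ p : Fin n, ((h p - if p = i then 1 else 0) + 1 - s))
        = (h i - s) + ∑ p ∈ Finset.univ.erase i, (h p + 1 - s) := by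
    intro i hi
    simp only [Finset.mem_filter, Finset.mem_univ, true_and] at hi
    rw [← Finset.add_sum_erase _ _ (Finset.mem_univ i)]
    congr 1
    · rw [if_pos rfl]
      omega
    · refine Finset.sum_congr rfl fun p hp => ?_
      rw [if_neg (Finset.mem_erase.1 hp).1, Nat.sub_zero]
  rw [Finset.sum_congr rfl hsplit, Finset.sum_add_distrib]
  congr 1
  rw [Finset.sum_filter]
  refine Finset.sum_congr rfl fun i _ => ?_
  by_cases hc : 1 ≤ h i <;> simp [hc] <;> omega
lemma T1 (M c l : ℕ) :
    ohnoL M (shufL [c + 2] (List.replicate l 2))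
      = ∑ i : Fin (l + 1), ∑ e ∈ Finset.Nat.antidiagonalTuple (l + 1) M,
          Zf (l + 1) (fun t => e t + if t = i then c else 0) := by
  rw [shufL, ohnoL_msum, shuffles_singleton, List.length_replicate,
    Multiset.map_coe, List.map_map, msum_range, Finset.sum_range]
  refine Finset.sum_congr rfl fun i _ => ?_
  have hins : List.insertIdx (List.replicate l 2) (i : ℕ) (c + 2)
      = List.ofFn (fun t : Fin (l + 1) =>
          if (t : ℕ) < (i : ℕ) then (fun _ : ℕ => 2) (t : ℕ)
          else if (t : ℕ) = (i : ℕ) then c + 2 else (fun _ : ℕ => 2) ((t : ℕ) - 1)) := by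
    rw [← List.ofFn_const l 2]
    exact insertIdx_ofFn (c + 2) (i : ℕ) l (fun _ => 2) (by omega)
  show ohno M (List.insertIdx (List.replicate l 2) (i : ℕ) (c + 2)) = _
  rw [hins, ohno_ofFn]
  refine Finset.sum_congr rfl fun e _ => ?_
  refine congrArg mzv (List.ofFn_inj.mpr ?_)
  funext t
  have hti := t.isLt
  by_cases ht : t = i
  · simp only [ht, lt_irrefl, if_false, if_pos rfl, if_true]
    omega
  · have ht' : (t : ℕ) ≠ (i : ℕ) := fun hc => ht (Fin.ext hc)
    simp only [if_neg ht', if_neg ht, ite_self, if_false]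
    omega
lemma T2 (M c l : ℕ) :
    ohnoL M (shuf (ofIdx [c + 2]) (shufL [3] (List.replicate l 2)))
      = ∑ q' : Fin (l + 1), ∑ i : Fin (l + 2),
          ∑ e ∈ Finset.Nat.antidiagonalTuple (l + 2) M,
            Zf (l + 2) (fun t => e t + (if t = i then c else 0)
              + (if t = Qmap q' i then 1 else 0)) := by
  rw [shufL, ohnoL_shuf_msum, shuffles_singleton, List.length_replicate,
    Multiset.map_coe, List.map_map, msum_range, Finset.sum_range]
  refine Finset.sum_congr rfl fun q' _ => ?_
  have hw : List.insertIdx (List.replicate l 2) (q' : ℕ) 3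
      = List.ofFn (fun t : Fin (l + 1) =>
          (fun n : ℕ => if n = (q' : ℕ) then 3 else 2) (t : ℕ)) := by
    rw [← List.ofFn_const l 2,
      insertIdx_ofFn 3 (q' : ℕ) l (fun _ => 2) (by omega)]
    refine List.ofFn_inj.mpr ?_
    funext t
    by_cases ht : (t : ℕ) = (q' : ℕ)
    · simp [ht]
    · simp [ht, ite_self]
  show ((shuffles [c + 2]
      (List.insertIdx (List.replicate l 2) (q' : ℕ) 3)).map (ohno M)).sum = _
  rw [hw, shuffles_singleton, List.length_ofFn, Multiset.map_coe, List.map_map,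
    msum_range, Finset.sum_range]
  refine Finset.sum_congr rfl fun i _ => ?_
  show ohno M (List.insertIdx _ (i : ℕ) (c + 2)) = _
  rw [insertIdx_ofFn (c + 2) (i : ℕ) (l + 1)
    (fun n => if n = (q' : ℕ) then 3 else 2) (by omega), ohno_ofFn]
  refine Finset.sum_congr rfl fun e _ => ?_
  refine congrArg mzv (List.ofFn_inj.mpr ?_)
  funext t
  have hti := t.isLt
  have hqi := q'.isLt
  have hii := i.isLt
  have hQ : ((Qmap q' i : Fin (l + 2)) : ℕ)
      = if (q' : ℕ) < (i : ℕ) then (q' : ℕ) else (q' : ℕ) + 1 := by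
    unfold Qmap; split <;> simp
  simp only [Fin.ext_iff, hQ]
  split_ifs <;> omega
lemma combine (s m n : ℕ) :
    ((∑ h ∈ Finset.Nat.antidiagonalTuple n (m + s + 1),
        (∑ i : Fin n, (h i - s)) • Zf n h)
      + ∑ h ∈ Finset.Nat.antidiagonalTuple n (m + s + 1),
          (∑ q ∈ Finset.univ.filter fun q => 1 ≤ h q,
            ∑ i ∈ Finset.univ.erase q, (h i + 1 - s)) • Zf n h)
      = ∑ h ∈ Finset.Nat.antidiagonalTuple n (m + s + 1),
          (∑ i ∈ Finset.univ.filter fun i => 1 ≤ h i,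
            ∑ p : Fin n, ((h p - if p = i then 1 else 0) + 1 - s)) • Zf n h := by
  rw [← Finset.sum_add_distrib]
  refine Finset.sum_congr rfl fun h _ => ?_
  rw [← add_smul, coeffD]
/-- For integers `s ≥ 2` and `m, l ≥ 0`,
`Σ_{a=0}^{m} ( O_{m−a}((s+a+3) ⧢ ({2}^l)) + O_{m−a}((s+a+2) ⧢ (3) ⧢ ({2}^{l−1})) )
  = Σ_{m₁+⋯+m_{l+1}=m+s} ( Σ_{p=1}^{l+1} max{m_p−s+1, 0} ) ·
      Σ_{i=1}^{l+1} ζ(m₁+2, …, m_{i−1}+2, m_i+3, m_{i+1}+2, …, m_{l+1}+2)`,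
where for `l = 0` the term involving `({2}^{l−1})` is understood to be `0`. -/
theorem statement15 (s m l : ℕ) (hs : 2 ≤ s) :
    (∑ a ∈ Finset.range (m + 1),
        (ohnoL (m - a) (shufL [s + a + 3] (List.replicate l 2))
          + if l = 0 then 0
            else ohnoL (m - a)
              (shuf (ofIdx [s + a + 2]) (shufL [3] (List.replicate (l - 1) 2)))))
    = ∑ f ∈ Finset.Nat.antidiagonalTuple (l + 1) (m + s),
        (∑ p : Fin (l + 1), ((f p + 1 - s : ℕ) : ℝ)) *
          ∑ i : Fin (l + 1),
            mzv (List.ofFn fun j : Fin (l + 1) =>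
              if j = i then f j + 3 else f j + 2) := by
  rw [Finset.sum_add_distrib]
  have hA : (∑ a ∈ Finset.range (m + 1),
        ohnoL (m - a) (shufL [s + a + 3] (List.replicate l 2)))
      = ∑ h ∈ Finset.Nat.antidiagonalTuple (l + 1) (m + s + 1),
          (∑ i : Fin (l + 1), (h i - s)) • Zf (l + 1) h := by
    rw [← partA s m (l + 1)]
    refine Finset.sum_congr rfl fun a _ => ?_
    have h3 : s + a + 3 = (s + a + 1) + 2 := by omega
    rw [h3, T1]
  rw [hA]
  have hR : (∑ f ∈ Finset.Nat.antidiagonalTuple (l + 1) (m + s),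
        (∑ p : Fin (l + 1), ((f p + 1 - s : ℕ) : ℝ)) *
          ∑ i : Fin (l + 1),
            mzv (List.ofFn fun j : Fin (l + 1) =>
              if j = i then f j + 3 else f j + 2))
      = ∑ h ∈ Finset.Nat.antidiagonalTuple (l + 1) (m + s + 1),
          (∑ i ∈ Finset.univ.filter fun i => 1 ≤ h i,
            ∑ p : Fin (l + 1), ((h p - if p = i then 1 else 0) + 1 - s))
              • Zf (l + 1) h := by
    rw [← partC s m (l + 1)]
    refine Finset.sum_congr rfl fun f _ => ?_
    rw [Finset.mul_sum]
    refine Finset.sum_congr rfl fun i _ => ?_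
    rw [← Nat.cast_sum, nsmul_eq_mul]
    congr 1
    unfold Zf
    refine congrArg mzv (List.ofFn_inj.mpr ?_)
    funext j
    by_cases hj : j = i
    · simp only [hj, if_pos rfl, if_true]
    · simp only [if_neg hj]
  rw [hR]
  by_cases hl : l = 0
  · subst hl
    simp only [↓reduceIte, Finset.sum_const_zero, add_zero]
    refine Finset.sum_congr rfl fun h _ => ?_
    congr 1
    rw [← coeffD s (0 + 1) h]
    have h0 : ∀ q : Fin (0 + 1),
        Finset.univ.erase q = (∅ : Finset (Fin (0 + 1))) := by decide
    have hz : (∑ q ∈ Finset.univ.filter fun q => 1 ≤ h q,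
        ∑ i ∈ Finset.univ.erase q, (h i + 1 - s)) = 0 :=
      Finset.sum_eq_zero fun q _ => by rw [h0 q, Finset.sum_empty]
    rw [hz, add_zero]
  · obtain ⟨l', rfl⟩ : ∃ l', l = l' + 1 := ⟨l - 1, by omega⟩
    have hB : (∑ a ∈ Finset.range (m + 1),
          (if l' + 1 = 0 then (0 : ℝ)
            else ohnoL (m - a)
              (shuf (ofIdx [s + a + 2]) (shufL [3] (List.replicate (l' + 1 - 1) 2)))))
        = ∑ h ∈ Finset.Nat.antidiagonalTuple (l' + 2) (m + s + 1),
            (∑ q ∈ Finset.univ.filter fun q => 1 ≤ h q,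
              ∑ i ∈ Finset.univ.erase q, (h i + 1 - s)) • Zf (l' + 2) h := by
      refine Eq.trans (Finset.sum_congr rfl fun a _ => ?_) (partB s m l')
      rw [if_neg (by omega : ¬ (l' + 1 = 0))]
      exact T2 (m - a) (s + a) l'
    rw [hB]
    exact combine s m (l' + 2)
end
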